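/- Let G be a group acting on a set X and let H = G_x be a point stabilizer that is not properly contained in any of its conjugates (for all g ∈ G, H ⊆ gHg^{-1} implies H = gHg^{-1}). Let B_[H] = {y ∈ X : G_y is conjugate to H} and let O_[H] be the set of G-orbits contained in B_[H]. Then the monoid End_G(B_[H]) is isomorphic to the wreath product of monoids (N_G(H)/H) ≀ Tran(O_[H]), where Tran(O_[H]) is the full transformation monoid on O_[H]. -/

import Mathlib

/-- The monoid of all `G`-equivariant transformations of `X`, as a submonoid of
`Function.End X` (composition of functions). -/
def gEnd (G X : Type*) [Group G] [MulAction G X] : Submonoid (Function.End X) where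
  carrier := {f | ∀ (g : G) (x : X), f (g • x) = g • f x}
  one_mem' := fun _ _ => rfl
  mul_mem' := fun {f₁ f₂} h₁ h₂ g x => by
    show f₁ (f₂ (g • x)) = g • f₁ (f₂ x)
    rw [h₂, h₁]

/-- The group of all bijective `G`-equivariant transformations of `X`, as a subgroup of
`Equiv.Perm X`. -/
def gAut (G X : Type*) [Group G] [MulAction G X] : Subgroup (Equiv.Perm X) where
  carrier := {f | ∀ (g : G) (x : X), f (g • x) = g • f x}
  one_mem' := fun _ _ => rfl
  mul_mem' := fun {f₁ f₂} h₁ h₂ g x => by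
    show f₁ (f₂ (g • x)) = g • f₁ (f₂ x)
    rw [h₂, h₁]
  inv_mem' := fun {f} hf g x => f.injective (by
    rw [← Equiv.Perm.mul_apply, mul_inv_cancel, Equiv.Perm.one_apply, hf,
      ← Equiv.Perm.mul_apply, mul_inv_cancel, Equiv.Perm.one_apply])

/-- The conjugate subgroup `g K g⁻¹`. -/
def conjSub {G : Type*} [Group G] (g : G) (K : Subgroup G) : Subgroup G :=
  Subgroup.map (MulAut.conj g).toMonoidHom K

/-- The set `O_[H]` of `G`-orbits of `X` whose point stabilizers are conjugate to `H`. -/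
def classOrbits (G X : Type*) [Group G] [MulAction G X] (H : Subgroup G) : Set (Set X) :=
  {s | ∃ y : X, (∃ g : G, MulAction.stabilizer G y = conjSub g H) ∧ s = MulAction.orbit G y}

/-- The quotient `N_G(H)/H` of the normalizer of `H` by `H`. -/
abbrev normQuot {G : Type*} [Group G] (H : Subgroup G) :=
  (Subgroup.normalizer (H : Set G)) ⧸ H.subgroupOf (Subgroup.normalizer (H : Set G))

/-- The wreath product of a monoid `M` with the full transformation monoid `Tran(Δ)`:
the underlying set is `M^Δ × Tran(Δ)` with multiplication
`(f, s)(f', s') = (δ ↦ f(s'(δ)) * f'(δ), s ∘ s')`. -/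
def MonoidWreath (M Δ : Type*) : Type _ := (Δ → M) × Function.End Δ

instance (M Δ : Type*) [Monoid M] : Monoid (MonoidWreath M Δ) where
  mul p q := (fun δ => p.1 (q.2 δ) * q.1 δ, p.2 * q.2)
  one := (fun _ => 1, 1)
  mul_assoc a b c := by
    refine Prod.ext ?_ rfl
    funext δ
    exact mul_assoc _ _ _
  one_mul p := by
    refine Prod.ext ?_ (one_mul _)
    funext δ
    exact one_mul _
  mul_one p := by
    refine Prod.ext ?_ (mul_one _)
    funext δ
    exact mul_one _

section Aux
variable {G : Type*} [Group G]

lemma mem_conjSub {a g : G} {K : Subgroup G} : g ∈ conjSub a K ↔ a⁻¹ * g * a ∈ K := by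
  constructor
  · rintro ⟨k, hk, rfl⟩
    simpa [MulAut.conj_apply, mul_assoc] using hk
  · intro h
    exact ⟨a⁻¹ * g * a, h, by simp [MulAut.conj_apply]; group⟩

lemma conjSub_conjSub (a b : G) (K : Subgroup G) :
    conjSub a (conjSub b K) = conjSub (a * b) K := by
  ext g
  simp only [mem_conjSub, mul_inv_rev]
  constructor
  · intro h
    rwa [show b⁻¹ * a⁻¹ * g * (a * b) = b⁻¹ * (a⁻¹ * g * a) * b by group]
  · intro h
    rwa [show b⁻¹ * (a⁻¹ * g * a) * b = b⁻¹ * a⁻¹ * g * (a * b) by group]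

lemma conjSub_one (K : Subgroup G) : conjSub 1 K = K := by
  ext g; simp [mem_conjSub]

lemma conjSub_eq_self_iff {n : G} {K : Subgroup G} : conjSub n K = K ↔ n ∈ Subgroup.normalizer (K : Set G) := by
  rw [Subgroup.mem_normalizer_iff, SetLike.ext_iff]
  simp only [mem_conjSub]
  constructor
  · intro h g
    have := h (n * g * n⁻¹)
    rwa [show n⁻¹ * (n * g * n⁻¹) * n = g by group] at this
  · intro h g
    simpa [show n * (n⁻¹ * g * n) * n⁻¹ = g by group] using h (n⁻¹ * g * n)

lemma stab_smul {X : Type*} [MulAction G X] (g : G) (y : X) :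
    MulAction.stabilizer G (g • y) = conjSub g (MulAction.stabilizer G y) :=
  MulAction.stabilizer_smul_eq_stabilizer_map_conj g y

lemma rigid {H : Subgroup G} (hH : ∀ g : G, H ≤ conjSub g H → H = conjSub g H)
    {a b : G} (hab : conjSub a H ≤ conjSub b H) : conjSub a H = conjSub b H := by
  have h1 : H ≤ conjSub (a⁻¹ * b) H := by
    intro h hh
    rw [mem_conjSub]
    have h2 : a * h * a⁻¹ ∈ conjSub b H := hab (by
      rw [mem_conjSub, show a⁻¹ * (a * h * a⁻¹) * a = h by group]; exact hh)
    rw [mem_conjSub] at h2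
    rwa [show (a⁻¹ * b)⁻¹ * h * (a⁻¹ * b) = b⁻¹ * (a * h * a⁻¹) * b by group]
  have h2 := hH _ h1
  calc conjSub a H = conjSub a (conjSub (a⁻¹ * b) H) := by rw [← h2]
    _ = conjSub b H := by rw [conjSub_conjSub, show a * (a⁻¹ * b) = b by group]

end Aux

theorem stmt9_main {G X : Type*} [Group G] [MulAction G X] (H : Subgroup G)
    (hH : ∀ g : G, H ≤ conjSub g H → H = conjSub g H)
    (B : SubMulAction G X)
    (hB : ∀ z : X, z ∈ B ↔ ∃ g : G, MulAction.stabilizer G z = conjSub g H) :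
    Nonempty ((gEnd G ↑B) ≃* MonoidWreath (normQuot H) ↑(classOrbits G X H)) := by
  classical
  -- choose basepoints with stabilizer exactly H
  have hbp : ∀ δ : classOrbits G X H, ∃ y : X,
      MulAction.stabilizer G y = H ∧ MulAction.orbit G y = (δ : Set X) := by
    rintro ⟨s, y, ⟨g, hg⟩, rfl⟩
    exact ⟨g⁻¹ • y, by
      rw [stab_smul, hg, conjSub_conjSub, inv_mul_cancel, conjSub_one],
      MulAction.orbit_smul _ _⟩
  choose yb hyb hyo using hbp
  have hybB : ∀ δ, yb δ ∈ B := fun δ => (hB _).2 ⟨1, by rw [hyb, conjSub_one]⟩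
  have hmemΩ : ∀ b : ↥B, MulAction.orbit G (b : X) ∈ classOrbits G X H :=
    fun b => ⟨b, (hB _).1 b.2, rfl⟩
  -- decomposition of points of B
  have hbo : ∀ b : ↥B, ∃ g : G, g • yb ⟨_, hmemΩ b⟩ = (b : X) := by
    intro b
    have h1 : (b : X) ∈ MulAction.orbit G (yb ⟨_, hmemΩ b⟩) := by
      rw [hyo]; exact MulAction.mem_orbit_self _
    exact MulAction.mem_orbit_iff.mp h1
  choose gb hgb using hbo
  -- equivariant maps do not decrease stabilizers
  have hstab_le : ∀ (f : ↥(gEnd G ↥B)) (b : ↥B),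
      MulAction.stabilizer G (b : X) ≤ MulAction.stabilizer G ((f.1 b : ↥B) : X) := by
    intro f b g hg
    have h1 : g • b = b := Subtype.ext (by
      rw [SubMulAction.val_smul]
      exact MulAction.mem_stabilizer_iff.mp hg)
    have h2 : g • f.1 b = f.1 b := (f.2 g b).symm.trans (congrArg f.1 h1)
    have h3 := congrArg Subtype.val h2
    rw [SubMulAction.val_smul] at h3
    exact MulAction.mem_stabilizer_iff.mpr h3
  -- `f` preserves the stabilizer of the basepoints
  have hstabY : ∀ (f : ↥(gEnd G ↥B)) (δ : classOrbits G X H),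
      MulAction.stabilizer G ((f.1 ⟨yb δ, hybB δ⟩ : ↥B) : X) = H := by
    intro f δ
    have hle : H ≤ MulAction.stabilizer G ((f.1 ⟨yb δ, hybB δ⟩ : ↥B) : X) :=
      le_trans (le_of_eq (hyb δ).symm) (hstab_le f ⟨yb δ, hybB δ⟩)
    obtain ⟨g, hg⟩ := (hB _).1 (f.1 ⟨yb δ, hybB δ⟩).2
    have h1 : conjSub 1 H ≤ conjSub g H := by rw [conjSub_one, ← hg]; exact hle
    have h2 := rigid hH h1
    rw [hg, ← h2, conjSub_one]
  have hgbN : ∀ b : ↥B, MulAction.stabilizer G (b : X) = H → gb b ∈ (Subgroup.normalizer (H : Set G)) := by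
    intro b hb
    have h1 : MulAction.stabilizer G (b : X) = conjSub (gb b) H := by
      rw [← hgb b, stab_smul, hyb]
    rw [hb] at h1
    exact conjSub_eq_self_iff.mp h1.symm
  have hdec : ∀ b : ↥B, b = gb b • (⟨yb ⟨_, hmemΩ b⟩, hybB _⟩ : ↥B) :=
    fun b => Subtype.ext (by rw [SubMulAction.val_smul]; exact (hgb b).symm)
  have hfdec : ∀ (f : ↥(gEnd G ↥B)) (b : ↥B),
      f.1 b = gb b • f.1 ⟨yb ⟨_, hmemΩ b⟩, hybB _⟩ := by
    intro f b
    conv_lhs => rw [hdec b]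
    exact f.2 _ _
  -- well-definedness of the quotient class
  have qeq : ∀ (b : ↥B) (δ' : classOrbits G X H),
      MulAction.orbit G (b : X) = (δ' : Set X) →
      ∀ (n : G) (hn : n ∈ (Subgroup.normalizer (H : Set G))), n • yb δ' = (b : X) →
      ∀ (hgN : gb b ∈ (Subgroup.normalizer (H : Set G))),
      (QuotientGroup.mk ⟨gb b, hgN⟩ : normQuot H) = QuotientGroup.mk ⟨n, hn⟩ := by
    intro b δ' hδ' n hn hnb hgN
    have hι : (⟨_, hmemΩ b⟩ : classOrbits G X H) = δ' := Subtype.ext hδ'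
    have hgb' := hgb b
    rw [congrArg yb hι] at hgb'
    rw [QuotientGroup.eq, Subgroup.mem_subgroupOf]
    have h1 : ((gb b)⁻¹ * n) • yb δ' = yb δ' := by
      rw [mul_smul, hnb, inv_smul_eq_iff]
      exact hgb'.symm
    show (gb b)⁻¹ * n ∈ H
    rw [← hyb δ']
    exact MulAction.mem_stabilizer_iff.mpr h1
  have qone : ∀ (m : G) (hm : m ∈ (Subgroup.normalizer (H : Set G))), m ∈ H →
      (QuotientGroup.mk ⟨m, hm⟩ : normQuot H) = 1 := by
    intro m hm hmH
    have h0 : (1 : normQuot H) = QuotientGroup.mk (1 : (Subgroup.normalizer (H : Set G))) := rfl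
    rw [h0, QuotientGroup.eq, Subgroup.mem_subgroupOf]
    show m⁻¹ * 1 ∈ H
    simpa using Subgroup.inv_mem _ hmH
  have hYι : ∀ δ : classOrbits G X H,
      (⟨_, hmemΩ (⟨yb δ, hybB δ⟩ : ↥B)⟩ : classOrbits G X H) = δ :=
    fun δ => Subtype.ext (hyo δ)
  have hgbH : ∀ δ : classOrbits G X H, gb (⟨yb δ, hybB δ⟩ : ↥B) ∈ H := by
    intro δ
    have h1 := hgb (⟨yb δ, hybB δ⟩ : ↥B)
    rw [congrArg yb (hYι δ)] at h1
    rw [← hyb δ]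
    exact MulAction.mem_stabilizer_iff.mpr h1
  have qmul : ∀ (m : G) (hmH : m ∈ H) (nn : (Subgroup.normalizer (H : Set G))) (hmn : m * ↑nn ∈ (Subgroup.normalizer (H : Set G))),
      (QuotientGroup.mk ⟨m * ↑nn, hmn⟩ : normQuot H) = QuotientGroup.mk nn := by
    intro m hmH nn hmn
    have h0 : (⟨m * ↑nn, hmn⟩ : (Subgroup.normalizer (H : Set G))) = ⟨m, Subgroup.le_normalizer hmH⟩ * nn := rfl
    rw [h0]
    show (QuotientGroup.mk ⟨m, Subgroup.le_normalizer hmH⟩ : normQuot H) *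
      QuotientGroup.mk nn = QuotientGroup.mk nn
    rw [qone m _ hmH, one_mul]
  refine ⟨MulEquiv.ofBijective
    ((MonoidHom.mk (OneHom.mk (fun f =>
      ((fun δ => (QuotientGroup.mk
          (⟨gb (f.1 ⟨yb δ, hybB δ⟩), hgbN _ (hstabY f δ)⟩ : (Subgroup.normalizer (H : Set G))) : normQuot H)⁻¹,
        fun δ => (⟨_, hmemΩ (f.1 ⟨yb δ, hybB δ⟩)⟩ : classOrbits G X H)) :
          MonoidWreath (normQuot H) (classOrbits G X H))) ?_) ?_ :
      ↥(gEnd G ↥B) →* MonoidWreath (normQuot H) (classOrbits G X H))) ⟨?_, ?_⟩⟩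
  · -- map_one
    refine Prod.ext ?_ ?_
    · funext δ
      show (QuotientGroup.mk ⟨gb (⟨yb δ, hybB δ⟩ : ↥B), _⟩ : normQuot H)⁻¹ = 1
      rw [inv_eq_one]
      exact qone _ _ (hgbH δ)
    · funext δ
      exact Subtype.ext (hyo δ)
  · -- map_mul
    intro f₁ f₂
    have key : ∀ δ : classOrbits G X H, (f₁ * f₂).1 ⟨yb δ, hybB δ⟩ =
        gb (f₂.1 ⟨yb δ, hybB δ⟩) •
          f₁.1 ⟨yb ⟨_, hmemΩ (f₂.1 ⟨yb δ, hybB δ⟩)⟩, hybB _⟩ :=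
      fun δ => hfdec f₁ (f₂.1 ⟨yb δ, hybB δ⟩)
    have hs : ∀ δ : classOrbits G X H,
        (⟨_, hmemΩ ((f₁ * f₂).1 ⟨yb δ, hybB δ⟩)⟩ : classOrbits G X H) =
        ⟨_, hmemΩ (f₁.1 ⟨yb ⟨_, hmemΩ (f₂.1 ⟨yb δ, hybB δ⟩)⟩, hybB _⟩)⟩ := by
      intro δ
      apply Subtype.ext
      show MulAction.orbit G _ = MulAction.orbit G _
      rw [key δ, SubMulAction.val_smul, MulAction.orbit_smul]
    refine Prod.ext ?_ ?_
    · funext δ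
      show (QuotientGroup.mk ⟨gb ((f₁ * f₂).1 ⟨yb δ, hybB δ⟩), _⟩ : normQuot H)⁻¹ =
        (QuotientGroup.mk ⟨gb (f₁.1 ⟨yb ⟨_, hmemΩ (f₂.1 ⟨yb δ, hybB δ⟩)⟩, hybB _⟩), _⟩ :
          normQuot H)⁻¹ *
        (QuotientGroup.mk ⟨gb (f₂.1 ⟨yb δ, hybB δ⟩), _⟩ : normQuot H)⁻¹
      rw [← mul_inv_rev]
      congr 1
      have hnb : (gb (f₂.1 ⟨yb δ, hybB δ⟩) *
          gb (f₁.1 ⟨yb ⟨_, hmemΩ (f₂.1 ⟨yb δ, hybB δ⟩)⟩, hybB _⟩)) •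
          yb ⟨_, hmemΩ ((f₁ * f₂).1 ⟨yb δ, hybB δ⟩)⟩ =
          (((f₁ * f₂).1 ⟨yb δ, hybB δ⟩ : ↥B) : X) := by
        rw [congrArg yb (hs δ), mul_smul,
          hgb (f₁.1 ⟨yb ⟨_, hmemΩ (f₂.1 ⟨yb δ, hybB δ⟩)⟩, hybB _⟩),
          ← SubMulAction.val_smul, ← key δ]
      exact qeq _ _ rfl _ (mul_mem (hgbN _ (hstabY f₂ δ)) (hgbN _ (hstabY f₁ _))) hnb _
    · funext δ
      exact hs δ
  · -- injective
    intro f₁ f₂ h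
    have h1 := congrArg Prod.fst h
    have h2 := congrArg Prod.snd h
    have hY : ∀ δ : classOrbits G X H, f₁.1 ⟨yb δ, hybB δ⟩ = f₂.1 ⟨yb δ, hybB δ⟩ := by
      intro δ
      have hsd : (⟨_, hmemΩ (f₁.1 ⟨yb δ, hybB δ⟩)⟩ : classOrbits G X H) =
          ⟨_, hmemΩ (f₂.1 ⟨yb δ, hybB δ⟩)⟩ := congrFun h2 δ
      have hqd : (QuotientGroup.mk
          ⟨gb (f₁.1 ⟨yb δ, hybB δ⟩), hgbN _ (hstabY f₁ δ)⟩ : normQuot H)⁻¹ =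
          (QuotientGroup.mk ⟨gb (f₂.1 ⟨yb δ, hybB δ⟩), hgbN _ (hstabY f₂ δ)⟩ :
            normQuot H)⁻¹ := congrFun h1 δ
      rw [inv_inj, QuotientGroup.eq, Subgroup.mem_subgroupOf] at hqd
      have hqd' : (gb (f₁.1 ⟨yb δ, hybB δ⟩))⁻¹ * gb (f₂.1 ⟨yb δ, hybB δ⟩) ∈ H := hqd
      apply Subtype.ext
      have hmem : ((gb (f₁.1 ⟨yb δ, hybB δ⟩))⁻¹ * gb (f₂.1 ⟨yb δ, hybB δ⟩)) •
          yb ⟨_, hmemΩ (f₁.1 ⟨yb δ, hybB δ⟩)⟩ = yb ⟨_, hmemΩ (f₁.1 ⟨yb δ, hybB δ⟩)⟩ := by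
        rw [← hyb ⟨_, hmemΩ (f₁.1 ⟨yb δ, hybB δ⟩)⟩] at hqd'
        exact MulAction.mem_stabilizer_iff.mp hqd'
      calc ((f₁.1 ⟨yb δ, hybB δ⟩ : ↥B) : X)
          = gb (f₁.1 ⟨yb δ, hybB δ⟩) • yb ⟨_, hmemΩ (f₁.1 ⟨yb δ, hybB δ⟩)⟩ :=
            (hgb _).symm
        _ = gb (f₁.1 ⟨yb δ, hybB δ⟩) •
            (((gb (f₁.1 ⟨yb δ, hybB δ⟩))⁻¹ * gb (f₂.1 ⟨yb δ, hybB δ⟩)) •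
              yb ⟨_, hmemΩ (f₁.1 ⟨yb δ, hybB δ⟩)⟩) := by rw [hmem]
        _ = gb (f₂.1 ⟨yb δ, hybB δ⟩) • yb ⟨_, hmemΩ (f₁.1 ⟨yb δ, hybB δ⟩)⟩ := by
            rw [← mul_smul]
            congr 1
            group
        _ = gb (f₂.1 ⟨yb δ, hybB δ⟩) • yb ⟨_, hmemΩ (f₂.1 ⟨yb δ, hybB δ⟩)⟩ := by
            rw [congrArg yb hsd]
        _ = ((f₂.1 ⟨yb δ, hybB δ⟩ : ↥B) : X) := hgb _
    apply Subtype.ext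
    funext b
    show f₁.1 b = f₂.1 b
    rw [hfdec f₁ b, hfdec f₂ b, hY]
  · -- surjective
    rintro ⟨p, s⟩
    have hrep : ∀ δ : classOrbits G X H, ∃ n : (Subgroup.normalizer (H : Set G)),
        (QuotientGroup.mk n : normQuot H) = (p δ)⁻¹ :=
      fun δ => ⟨((p δ)⁻¹).out, Quotient.out_eq' _⟩
    choose nr hnr using hrep
    have hts : ∀ δ : classOrbits G X H,
        MulAction.stabilizer G ((nr δ : G) • yb (s δ)) = H := by
      intro δ
      rw [stab_smul, hyb]
      exact conjSub_eq_self_iff.mpr (nr δ).2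
    have htB : ∀ δ : classOrbits G X H, ((nr δ : G) • yb (s δ)) ∈ B :=
      fun δ => (hB _).2 ⟨nr δ, by rw [stab_smul, hyb]⟩
    refine ⟨⟨fun b => gb b •
      (⟨(nr ⟨_, hmemΩ b⟩ : G) • yb (s ⟨_, hmemΩ b⟩), htB _⟩ : ↥B), ?_⟩, ?_⟩
    · -- equivariance
      intro g b
      have hι : (⟨_, hmemΩ (g • b)⟩ : classOrbits G X H) = ⟨_, hmemΩ b⟩ := by
        apply Subtype.ext
        show MulAction.orbit G _ = MulAction.orbit G _
        rw [SubMulAction.val_smul, MulAction.orbit_smul]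
      have h3 : ((g * gb b)⁻¹ * gb (g • b)) • yb ⟨_, hmemΩ b⟩ = yb ⟨_, hmemΩ b⟩ := by
        rw [mul_smul, inv_smul_eq_iff, mul_smul, hgb b, ← SubMulAction.val_smul,
          ← congrArg yb hι]
        exact hgb (g • b)
      have hmemH : (g * gb b)⁻¹ * gb (g • b) ∈ H := by
        rw [← hyb ⟨_, hmemΩ b⟩]
        exact MulAction.mem_stabilizer_iff.mpr h3
      have h5 : ((g * gb b)⁻¹ * gb (g • b)) •
          ((nr ⟨_, hmemΩ b⟩ : G) • yb (s ⟨_, hmemΩ b⟩)) =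
          (nr ⟨_, hmemΩ b⟩ : G) • yb (s ⟨_, hmemΩ b⟩) := by
        rw [← hts ⟨_, hmemΩ b⟩] at hmemH
        exact MulAction.mem_stabilizer_iff.mp hmemH
      apply Subtype.ext
      show gb (g • b) • ((nr ⟨_, hmemΩ (g • b)⟩ : G) • yb (s ⟨_, hmemΩ (g • b)⟩)) =
        g • (gb b • ((nr ⟨_, hmemΩ b⟩ : G) • yb (s ⟨_, hmemΩ b⟩)))
      rw [hι]
      calc gb (g • b) • ((nr ⟨_, hmemΩ b⟩ : G) • yb (s ⟨_, hmemΩ b⟩))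
          = ((g * gb b) * ((g * gb b)⁻¹ * gb (g • b))) •
            ((nr ⟨_, hmemΩ b⟩ : G) • yb (s ⟨_, hmemΩ b⟩)) := by
            rw [show (g * gb b) * ((g * gb b)⁻¹ * gb (g • b)) = gb (g • b) by group]
        _ = (g * gb b) • (((g * gb b)⁻¹ * gb (g • b)) •
            ((nr ⟨_, hmemΩ b⟩ : G) • yb (s ⟨_, hmemΩ b⟩))) := mul_smul _ _ _
        _ = (g * gb b) • ((nr ⟨_, hmemΩ b⟩ : G) • yb (s ⟨_, hmemΩ b⟩)) := by rw [h5]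
        _ = g • (gb b • ((nr ⟨_, hmemΩ b⟩ : G) • yb (s ⟨_, hmemΩ b⟩))) := mul_smul _ _ _
    · -- the image is (p, s)
      have hso : ∀ δ : classOrbits G X H, MulAction.orbit G
          (gb (⟨yb δ, hybB δ⟩ : ↥B) •
            ((nr ⟨_, hmemΩ (⟨yb δ, hybB δ⟩ : ↥B)⟩ : G) •
              yb (s ⟨_, hmemΩ (⟨yb δ, hybB δ⟩ : ↥B)⟩))) = ((s δ : Set X)) := by
        intro δ
        rw [hYι δ, MulAction.orbit_smul, MulAction.orbit_smul, hyo]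
      refine Prod.ext ?_ ?_
      · funext δ
        refine Eq.trans (congrArg Inv.inv
          (qeq _ (s δ) (hso δ) (gb (⟨yb δ, hybB δ⟩ : ↥B) * (nr δ : G)) ?_ ?_ _)) ?_
        · exact mul_mem (Subgroup.le_normalizer (hgbH δ)) (nr δ).2
        · show (gb (⟨yb δ, hybB δ⟩ : ↥B) * (nr δ : G)) • yb (s δ) =
            gb (⟨yb δ, hybB δ⟩ : ↥B) •
              ((nr ⟨_, hmemΩ (⟨yb δ, hybB δ⟩ : ↥B)⟩ : G) •
                yb (s ⟨_, hmemΩ (⟨yb δ, hybB δ⟩ : ↥B)⟩))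
          rw [hYι δ, mul_smul]
        · rw [qmul _ (hgbH δ) (nr δ), hnr δ, inv_inv]
      · funext δ
        exact Subtype.ext (hso δ)

/-- If the point stabilizer `H = G_x` is not properly contained in any of
its conjugates, then `End_G(B_[H]) ≅ (N_G(H)/H) ≀ Tran(O_[H])`, the wreath product of the
group `N_G(H)/H` with the full transformation monoid on the set of orbits in `B_[H]`. -/
theorem stmt9 {G X : Type*} [Group G] [MulAction G X] (x : X)
    (hx : ∀ g : G, MulAction.stabilizer G x ≤ conjSub g (MulAction.stabilizer G x) →
        MulAction.stabilizer G x = conjSub g (MulAction.stabilizer G x))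
    (B : SubMulAction G X)
    (hB : ∀ z : X, z ∈ B ↔
      ∃ g : G, MulAction.stabilizer G z = conjSub g (MulAction.stabilizer G x)) :
    Nonempty ((gEnd G ↑B) ≃*
      MonoidWreath (normQuot (MulAction.stabilizer G x))
        ↑(classOrbits G X (MulAction.stabilizer G x))) :=
  stmt9_main (MulAction.stabilizer G x) hx B hB
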